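/- arXiv:2102.13638 — 2 statements merged into one kernel-verified Lean document; each statement's English description precedes it below -/
import Mathlib

section
/- Conditional-to-unconditional convergence in distribution (Lemma B.3): Let (Z_n, X_n), n = 1,2,…, and Z be random variables on a probability space (Ω, ℬ, μ), with Z_n and Z taking values in a Euclidean space and X_n taking values in a standard Borel space 𝒳_n. Let F_n : 𝒳_n → ℝ be measurable with F_n(X_n) → 0 in probability. Suppose that, for every nonrandom sequence x_n ∈ 𝒳_n with F_n(x_n) → 0, the conditional distribution of Z_n given X_n = x_n (a fixed regular conditional distribution of Z_n given X_n, evaluated at x_n) converges weakly to the law of Z. Then Z_n converges in distribution to Z unconditionally. -/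
/-!
Statement 17 (Lemma B.3): conditional-to-unconditional convergence in distribution.
-/

open MeasureTheory ProbabilityTheory Filter

open scoped ENNReal

namespace PermTestPaper

/-- From convergence in probability, extract a deterministic sequence `e n → 0`
with `μ {ω | e n < |u n ω|} → 0`. -/
lemma exists_eps_seq {Ω : Type*} [MeasurableSpace Ω] (μ : Measure Ω) (u : ℕ → Ω → ℝ)
    (h : ∀ ε > (0:ℝ), Tendsto (fun n => μ {ω | ε < |u n ω|}) atTop (nhds 0)) :
    ∃ e : ℕ → ℝ, (∀ n, 0 ≤ e n) ∧ Tendsto e atTop (nhds 0) ∧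
      Tendsto (fun n => μ {ω | e n < |u n ω|}) atTop (nhds 0) := by
  have hpos : ∀ k : ℕ, (0:ℝ) < ((k:ℝ)+1)⁻¹ := fun k => by positivity
  have hN : ∀ k : ℕ, ∃ N, ∀ n ≥ N,
      μ {ω | ((k:ℝ)+1)⁻¹ < |u n ω|} ≤ ENNReal.ofReal (((k:ℝ)+1)⁻¹) := by
    intro k
    have h1 : (0:ℝ≥0∞) < ENNReal.ofReal (((k:ℝ)+1)⁻¹) := ENNReal.ofReal_pos.mpr (hpos k)
    have := (h _ (hpos k)).eventually (Iic_mem_nhds h1)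
    simpa using eventually_atTop.mp this
  choose N' hN' using hN
  -- strictly monotone `M` with `N' k ≤ M k`
  set M : ℕ → ℕ := fun k => Nat.rec (N' 0) (fun k ih => max (ih + 1) (N' (k+1))) k with hM
  have hMsucc : ∀ k, M k < M (k+1) := fun k =>
    lt_of_lt_of_le (Nat.lt_succ_self _) (le_max_left _ _)
  have hMs : StrictMono M := strictMono_nat_of_lt_succ hMsucc
  have hMN : ∀ k, N' k ≤ M k := by
    intro k
    cases k with
    | zero => exact le_rfl
    | succ k => exact le_max_right _ _
  set c : ℕ → ℕ := fun n => ((Finset.range (n+1)).filter (fun k => M k ≤ n)).card with hc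
  have key : ∀ j n, M j ≤ n ↔ j < c n := by
    intro j n
    constructor
    · intro hjn
      have hsub : Finset.range (j+1) ⊆ (Finset.range (n+1)).filter (fun k => M k ≤ n) := by
        intro k hk
        have hkj : k ≤ j := Nat.lt_succ_iff.mp (Finset.mem_range.mp hk)
        have hMk : M k ≤ n := le_trans (hMs.monotone hkj) hjn
        have hkn : k ≤ n := le_trans hMs.le_apply hMk
        exact Finset.mem_filter.mpr ⟨Finset.mem_range.mpr (Nat.lt_succ_of_le hkn), hMk⟩
      have hcard := Finset.card_le_card hsub
      simp only [Finset.card_range] at hcard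
      exact lt_of_lt_of_le (Nat.lt_succ_self j) hcard
    · intro hjc
      by_contra hnot
      push_neg at hnot
      have hsub : (Finset.range (n+1)).filter (fun k => M k ≤ n) ⊆ Finset.range j := by
        intro k hk
        obtain ⟨-, hMk⟩ := Finset.mem_filter.mp hk
        by_contra hkj
        rw [Finset.mem_range, not_lt] at hkj
        exact absurd (le_trans (hMs.monotone hkj) hMk) (not_le.mpr hnot)
      have hcard := Finset.card_le_card hsub
      simp only [Finset.card_range] at hcard
      exact absurd hjc (not_lt.mpr hcard)
  refine ⟨fun n => ((c n : ℝ))⁻¹, fun n => inv_nonneg.mpr (Nat.cast_nonneg _), ?_, ?_⟩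
  · have hcTop : Tendsto c atTop atTop := by
      rw [tendsto_atTop_atTop]
      intro b
      exact ⟨M b, fun n hn => le_of_lt ((key b n).mp hn)⟩
    exact tendsto_inv_atTop_zero.comp (tendsto_natCast_atTop_atTop.comp hcTop)
  · rw [ENNReal.tendsto_atTop_zero]
    intro ε hε
    obtain ⟨j, hj⟩ := ENNReal.exists_inv_nat_lt hε.ne'
    refine ⟨M j, fun n hn => ?_⟩
    have hjc : j < c n := (key j n).mp hn
    have hcpos : 0 < c n := lt_of_le_of_lt (Nat.zero_le j) hjc
    set j' : ℕ := c n - 1 with hj'def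
    have hj' : c n = j' + 1 := (Nat.succ_pred_eq_of_pos hcpos).symm
    have hjj' : j ≤ j' := by omega
    have hMj' : M j' ≤ n := (key j' n).mpr (by omega)
    have hb := hN' j' n (le_trans (hMN j') hMj')
    have hcast : ((c n : ℕ):ℝ) = (j':ℝ)+1 := by rw [hj']; push_cast; ring
    have hset : {ω | ((c n : ℝ))⁻¹ < |u n ω|} = {ω | ((j':ℝ)+1)⁻¹ < |u n ω|} := by
      rw [hcast]
    calc μ {ω | ((c n : ℝ))⁻¹ < |u n ω|}
        ≤ ENNReal.ofReal (((j':ℝ)+1)⁻¹) := hset ▸ hb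
      _ = ((j':ℝ≥0∞)+1)⁻¹ := by
          rw [ENNReal.ofReal_inv_of_pos (show (0:ℝ) < (j':ℝ)+1 by positivity)]
          congr 1
          rw [show ((j':ℝ)+1) = ((j'+1 : ℕ):ℝ) by push_cast; ring, ENNReal.ofReal_natCast]
          push_cast; ring
      _ ≤ ((j:ℕ):ℝ≥0∞)⁻¹ := by
          rw [ENNReal.inv_le_inv]
          exact_mod_cast le_trans (Nat.cast_le.mpr hjj') (by simp : ((j':ℝ≥0∞)) ≤ (j':ℝ≥0∞)+1)
      _ ≤ ε := hj.le

/-- **Lemma B.3**: let `(Z_n, X_n)` and `Z` live on a common probability space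
`(Ω, ℬ, μ)`, with `Z_n, Z` valued in the Euclidean space `ℝ^d` and `X_n` valued in a
standard Borel space `𝒳 n`.  Let `F_n : 𝒳 n → ℝ` be measurable with `F_n(X_n) → 0`
in probability, and let `κ n` be a regular conditional distribution of `Z_n` given
`X_n`.  If for every nonrandom sequence `x_n ∈ 𝒳 n` with `F_n(x_n) → 0` the
conditional laws `κ n (x n)` converge weakly to the law of `Z`, then `Z_n` converges
in distribution to `Z` unconditionally.  (Weak convergence is phrased via bounded
continuous test functions.) -/
theorem conditional_clt_to_unconditional
    (d : ℕ) {Ω : Type*} [MeasurableSpace Ω] (μ : Measure Ω) [IsProbabilityMeasure μ]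
    (𝒳 : ℕ → Type*) [∀ n, MeasurableSpace (𝒳 n)] [∀ n, StandardBorelSpace (𝒳 n)]
    (Z : ℕ → Ω → (Fin d → ℝ)) (Zlim : Ω → (Fin d → ℝ))
    (X : (n : ℕ) → Ω → 𝒳 n)
    (hZmeas : ∀ n, Measurable (Z n)) (hZlimmeas : Measurable Zlim)
    (hXmeas : ∀ n, Measurable (X n))
    (F : (n : ℕ) → 𝒳 n → ℝ) (hFmeas : ∀ n, Measurable (F n))
    -- `F_n(X_n) → 0` in probability
    (hFprob : ∀ ε > (0:ℝ),
      Tendsto (fun n => μ {ω | ε < |F n (X n ω)|}) atTop (nhds 0))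
    -- `κ n` is a regular conditional distribution of `Z_n` given `X_n`
    (κ : (n : ℕ) → Kernel (𝒳 n) (Fin d → ℝ)) (hκ : ∀ n, IsMarkovKernel (κ n))
    (hdisint : ∀ n, ∀ B : Set (Fin d → ℝ), ∀ A : Set (𝒳 n),
      MeasurableSet B → MeasurableSet A →
      μ {ω | Z n ω ∈ B ∧ X n ω ∈ A} = ∫⁻ x in A, κ n x B ∂(μ.map (X n)))
    -- conditional convergence in distribution along every `F_n`-null deterministic sequence
    (hcond : ∀ x : (n : ℕ) → 𝒳 n,
      Tendsto (fun n => F n (x n)) atTop (nhds 0) →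
      ∀ f : BoundedContinuousFunction (Fin d → ℝ) ℝ,
        Tendsto (fun n => ∫ z, f z ∂(κ n (x n))) atTop
          (nhds (∫ ω, f (Zlim ω) ∂μ))) :
    -- unconditional convergence in distribution
    ∀ f : BoundedContinuousFunction (Fin d → ℝ) ℝ,
      Tendsto (fun n => ∫ ω, f (Z n ω) ∂μ) atTop (nhds (∫ ω, f (Zlim ω) ∂μ)) := by
  intro f
  classical
  set L := ∫ ω, f (Zlim ω) ∂μ with hLdef
  obtain ⟨e, he0, heLim, heProb⟩ := exists_eps_seq μ (fun n ω => F n (X n ω)) hFprob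
  set ν : (n : ℕ) → Measure (𝒳 n) := fun n => μ.map (X n) with hν
  have hνP : ∀ n, IsProbabilityMeasure (ν n) := fun n =>
    Measure.isProbabilityMeasure_map (hXmeas n).aemeasurable
  set g : (n : ℕ) → 𝒳 n → ℝ := fun n x => ∫ y, f y ∂(κ n x) with hg
  have hsm : ∀ n, StronglyMeasurable (fun p : 𝒳 n × (Fin d → ℝ) => f p.2) :=
    fun n => (f.continuous.measurable.comp measurable_snd).stronglyMeasurable
  have hgm : ∀ n, StronglyMeasurable (g n) := fun n => by
    haveI := hκ n
    exact (hsm n).integral_kernel_prod_right'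
  have hgb : ∀ n x, |g n x| ≤ ‖f‖ := by
    intro n x
    haveI := hκ n
    have hb : ∀ᵐ y ∂(κ n x), ‖f y‖ ≤ ‖f‖ :=
      Eventually.of_forall (fun y => f.norm_coe_le_norm y)
    calc |g n x| = ‖g n x‖ := (Real.norm_eq_abs _).symm
      _ ≤ ‖f‖ * ((κ n x) Set.univ).toReal := norm_integral_le_of_norm_le_const hb
      _ = ‖f‖ := by simp
  -- Step A: unconditional integral as an integral of conditional ones
  have hstepA : ∀ n, ∫ ω, f (Z n ω) ∂μ = ∫ x, g n x ∂(ν n) := by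
    intro n
    haveI := hκ n
    haveI := hνP n
    have hpm : Measurable (fun ω => (X n ω, Z n ω)) := (hXmeas n).prodMk (hZmeas n)
    have hcomp : μ.map (fun ω => (X n ω, Z n ω)) = (ν n) ⊗ₘ (κ n) := by
      haveI : IsProbabilityMeasure (μ.map (fun ω => (X n ω, Z n ω))) :=
        Measure.isProbabilityMeasure_map hpm.aemeasurable
      refine ext_of_generate_finite _ generateFrom_prod.symm isPiSystem_prod ?_ ?_
      · rintro s ⟨A, hA, B, hB, rfl⟩
        have hA' : MeasurableSet A := hA
        have hB' : MeasurableSet B := hB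
        rw [Measure.map_apply hpm (hA'.prod hB'), Measure.compProd_apply_prod hA' hB']
        have hpre : (fun ω => (X n ω, Z n ω)) ⁻¹' (A ×ˢ B) = {ω | Z n ω ∈ B ∧ X n ω ∈ A} := by
          ext ω; simp [Set.mem_prod, and_comm]
        rw [hpre]
        exact hdisint n B A hB' hA'
      · rw [Measure.map_apply hpm MeasurableSet.univ]
        simp
    have hint : Integrable (fun p : 𝒳 n × (Fin d → ℝ) => f p.2) ((ν n) ⊗ₘ (κ n)) := by
      refine Integrable.mono' (integrable_const ‖f‖) (hsm n).aestronglyMeasurable ?_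
      exact Eventually.of_forall (fun p => f.norm_coe_le_norm p.2)
    calc ∫ ω, f (Z n ω) ∂μ
        = ∫ p, f p.2 ∂(μ.map (fun ω => (X n ω, Z n ω))) :=
          (integral_map hpm.aemeasurable (hsm n).aestronglyMeasurable).symm
      _ = ∫ p, f p.2 ∂((ν n) ⊗ₘ (κ n)) := by rw [hcomp]
      _ = ∫ x, g n x ∂(ν n) := Measure.integral_compProd hint
  -- constants
  set C : ℝ := ‖f‖ + |L| with hC
  have hC0 : 0 ≤ C := add_nonneg (norm_nonneg _) (abs_nonneg _)
  set G : (n : ℕ) → Set (𝒳 n) := fun n => {x | |F n x| ≤ e n} with hG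
  have hGmeas : ∀ n, MeasurableSet (G n) := fun n =>
    measurableSet_le (hFmeas n).abs measurable_const
  have habsle : ∀ n x, |g n x - L| ≤ C := by
    intro n x
    have h1 := (abs_add_le (g n x) (-L)).trans (add_le_add (hgb n x) le_rfl)
    simpa [sub_eq_add_neg, abs_neg] using h1
  set a : ℕ → ℝ := fun n => sSup ((fun x => |g n x - L|) '' G n) with ha
  have haBdd : ∀ n, ∀ y ∈ (fun x => |g n x - L|) '' G n, y ≤ C := by
    rintro n y ⟨x, -, rfl⟩; exact habsle n x
  have ha0 : ∀ n, 0 ≤ a n := fun n =>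
    Real.sSup_nonneg (by rintro y ⟨x, -, rfl⟩; exact abs_nonneg _)
  -- bad-set measure
  have hνGc : ∀ n, ν n (G n)ᶜ = μ {ω | e n < |F n (X n ω)|} := by
    intro n
    rw [show ν n = μ.map (X n) from rfl, Measure.map_apply (hXmeas n) (hGmeas n).compl]
    congr 1
    ext ω
    simp [hG, not_le]
  have hmReal : Tendsto (fun n => (μ {ω | e n < |F n (X n ω)|}).toReal) atTop (nhds 0) := by
    have h1 := (ENNReal.tendsto_toReal (by simp : (0:ℝ≥0∞) ≠ ⊤)).comp heProb
    rw [ENNReal.toReal_zero] at h1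
    exact h1
  -- the sup over the good set tends to zero
  have haTendsto : Tendsto a atTop (nhds 0) := by
    by_contra hcon
    rw [Metric.tendsto_atTop] at hcon
    push_neg at hcon
    obtain ⟨δ, hδ, hfreq⟩ := hcon
    have hfreq' : ∃ᶠ n in atTop, δ ≤ a n := by
      rw [frequently_atTop]
      intro N
      obtain ⟨n, hn, hd⟩ := hfreq N
      refine ⟨n, hn, ?_⟩
      rw [Real.dist_eq, sub_zero, abs_of_nonneg (ha0 n)] at hd
      exact hd
    obtain ⟨φ, hφmono, hφ⟩ := extraction_of_frequently_atTop hfreq'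
    have hΩ : Nonempty Ω := by
      by_contra hemp
      rw [not_nonempty_iff] at hemp
      have h1 : μ Set.univ = 1 := measure_univ
      rw [Set.univ_eq_empty_iff.mpr hemp, measure_empty] at h1
      exact zero_ne_one h1
    obtain ⟨ω₀⟩ := hΩ
    set P : (n : ℕ) → 𝒳 n → Prop :=
      fun n x => x ∈ G n ∧ (n ∈ Set.range φ → δ/2 < |g n x - L|) with hP
    set x' : (n : ℕ) → 𝒳 n := fun n => if h : ∃ x, P n x then h.choose else X n ω₀ with hx'
    have hx'ev : ∀ᶠ n in atTop, ∃ x, P n x := by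
      have h1 : ∀ᶠ n in atTop, μ {ω | e n < |F n (X n ω)|} < 1 :=
        heProb.eventually (Iio_mem_nhds (by norm_num : (0:ℝ≥0∞) < 1))
      filter_upwards [h1] with n hn
      have hGne : (G n).Nonempty := by
        by_contra hGe
        rw [Set.not_nonempty_iff_eq_empty] at hGe
        have huniv : {ω | e n < |F n (X n ω)|} = Set.univ := by
          ext ω
          simp only [Set.mem_setOf_eq, Set.mem_univ, iff_true]
          by_contra hle
          push_neg at hle
          exact Set.eq_empty_iff_forall_notMem.mp hGe (X n ω) hle
        rw [huniv, measure_univ] at hn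
        exact lt_irrefl _ hn
      by_cases hr : n ∈ Set.range φ
      · have hδa : δ ≤ a n := by obtain ⟨k, rfl⟩ := hr; exact hφ k
        have hSne : ((fun x => |g n x - L|) '' G n).Nonempty := hGne.image _
        have hhalf : δ/2 < a n := by linarith
        obtain ⟨y, ⟨x, hxG, rfl⟩, hy⟩ := exists_lt_of_lt_csSup hSne hhalf
        exact ⟨x, hxG, fun _ => hy⟩
      · obtain ⟨x, hxG⟩ := hGne
        exact ⟨x, hxG, fun h => absurd h hr⟩
    have hx'G : ∀ᶠ n in atTop, |F n (x' n)| ≤ e n := by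
      filter_upwards [hx'ev] with n hn
      rw [hx']
      simp only [dif_pos hn]
      exact hn.choose_spec.1
    have hx'F : Tendsto (fun n => F n (x' n)) atTop (nhds 0) := by
      rw [tendsto_zero_iff_abs_tendsto_zero]
      exact squeeze_zero' (Eventually.of_forall (fun n => abs_nonneg _)) hx'G heLim
    have hgconv := hcond x' hx'F f
    have hgφ : Tendsto (fun k => g (φ k) (x' (φ k))) atTop (nhds L) :=
      hgconv.comp hφmono.tendsto_atTop
    have hev2 : ∀ᶠ k in atTop, |g (φ k) (x' (φ k)) - L| < δ/2 := by
      obtain ⟨N, hN⟩ := Metric.tendsto_atTop.mp hgφ (δ/2) (by linarith)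
      refine eventually_atTop.mpr ⟨N, fun k hk => ?_⟩
      have := hN k hk
      rwa [Real.dist_eq] at this
    have hbad : ∀ᶠ k in atTop, δ/2 < |g (φ k) (x' (φ k)) - L| := by
      filter_upwards [hφmono.tendsto_atTop.eventually hx'ev] with k hk
      have hx'eq : x' (φ k) = hk.choose := by rw [hx']; simp only [dif_pos hk]
      rw [hx'eq]
      exact hk.choose_spec.2 ⟨k, rfl⟩
    obtain ⟨k, hk1, hk2⟩ := (hbad.and hev2).exists
    linarith
  -- final bound and squeeze
  have hbound : ∀ n, |(∫ x, g n x ∂(ν n)) - L|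
      ≤ a n + C * (μ {ω | e n < |F n (X n ω)|}).toReal := by
    intro n
    haveI := hνP n
    have hgi : Integrable (g n) (ν n) :=
      Integrable.mono' (integrable_const ‖f‖) (hgm n).aestronglyMeasurable
        (Eventually.of_forall fun x => by rw [Real.norm_eq_abs]; exact hgb n x)
    have hLint : ∫ _x, L ∂(ν n) = L := by simp
    have h1 : (∫ x, g n x ∂(ν n)) - L = ∫ x, (g n x - L) ∂(ν n) := by
      rw [integral_sub hgi (integrable_const L), hLint]
    have hptw : ∀ x, |g n x - L| ≤ a n + Set.indicator (G n)ᶜ (fun _ => C) x := by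
      intro x
      by_cases hx : x ∈ G n
      · have h2 : |g n x - L| ≤ a n :=
          le_csSup ⟨C, fun y hy => haBdd n y hy⟩ (Set.mem_image_of_mem _ hx)
        have h3 : 0 ≤ Set.indicator (G n)ᶜ (fun _ => C) x :=
          Set.indicator_nonneg (fun _ _ => hC0) x
        linarith
      · rw [Set.indicator_of_mem (Set.mem_compl hx)]
        have h4 := habsle n x
        linarith [ha0 n]
    have hind : Integrable (Set.indicator (G n)ᶜ (fun _ => C)) (ν n) :=
      (integrable_const C).indicator (hGmeas n).compl
    calc |(∫ x, g n x ∂(ν n)) - L| = |∫ x, (g n x - L) ∂(ν n)| := by rw [h1]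
      _ ≤ ∫ x, |g n x - L| ∂(ν n) := by
          have h5 := norm_integral_le_integral_norm (μ := ν n) (fun x => g n x - L)
          simpa [Real.norm_eq_abs] using h5
      _ ≤ ∫ x, (a n + Set.indicator (G n)ᶜ (fun _ => C) x) ∂(ν n) :=
          integral_mono (hgi.sub (integrable_const L)).abs
            ((integrable_const (a n)).add hind) hptw
      _ = a n + C * (ν n (G n)ᶜ).toReal := by
          rw [integral_add (integrable_const (a n)) hind, integral_const,
            integral_indicator_const C (hGmeas n).compl]
          simp [measure_univ, mul_comm, measureReal_def]
      _ = a n + C * (μ {ω | e n < |F n (X n ω)|}).toReal := by rw [hνGc n]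
  rw [show (fun n => ∫ ω, f (Z n ω) ∂μ) = fun n => ∫ x, g n x ∂(ν n) from funext hstepA]
  rw [tendsto_iff_norm_sub_tendsto_zero]
  have h6 : Tendsto (fun n => a n + C * (μ {ω | e n < |F n (X n ω)|}).toReal)
      atTop (nhds (0 + C * 0)) := haTendsto.add (hmReal.const_mul C)
  have h7 : Tendsto (fun n => a n + C * (μ {ω | e n < |F n (X n ω)|}).toReal)
      atTop (nhds 0) := by simpa using h6
  exact squeeze_zero (fun n => norm_nonneg _)
    (fun n => by rw [Real.norm_eq_abs]; exact hbound n) h7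

end PermTestPaper
end

section
/- Uniform convergence of random CDFs (Lemma B.5, a Pólya-type theorem in probability): Let (F_n) be a sequence of random cumulative distribution functions (for each ω, F_n(·, ω) : ℝ → [0,1] is non-decreasing and right-continuous with limits 0 at −∞ and 1 at +∞) that converges pointwise in probability to a deterministic continuous CDF F, i.e., for every x ∈ ℝ, F_n(x) → F(x) in probability. Then the convergence is uniform in probability: sup_{x∈ℝ} |F_n(x) − F(x)| → 0 in probability. -/
/-!
Statement 19 (Lemma B.5): uniform convergence in probability of random CDFs to a
continuous deterministic CDF (a Pólya-type theorem in probability).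
-/

open MeasureTheory Filter

namespace PermTestPaper

/-- Intermediate value theorem for a continuous CDF. -/
lemma exists_eq_of_cdf {G : ℝ → ℝ} (hGcont : Continuous G) (hGmono : Monotone G)
    (hGbot : Tendsto G atBot (nhds 0)) (hGtop : Tendsto G atTop (nhds 1))
    {y : ℝ} (h0 : 0 < y) (h1 : y < 1) : ∃ c, G c = y := by
  obtain ⟨a, ha⟩ : ∃ a, G a < y := (hGbot.eventually (eventually_lt_nhds h0)).exists
  obtain ⟨b, hb⟩ : ∃ b, y < G b := (hGtop.eventually (eventually_gt_nhds h1)).exists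
  have hab : a ≤ b := by
    by_contra h
    push_neg at h
    exact absurd (hGmono h.le) (not_le.mpr (ha.trans hb))
  obtain ⟨c, -, hc⟩ := intermediate_value_Icc hab hGcont.continuousOn ⟨ha.le, hb.le⟩
  exact ⟨c, hc⟩

/-- Key deterministic estimate: a Pólya-type grid bound. -/
lemma key_estimate {f G : ℝ → ℝ} (hf : Monotone f) (hf0 : ∀ t, 0 ≤ f t)
    (hf1 : ∀ t, f t ≤ 1)
    (hGmono : Monotone G) (hG0 : ∀ t, 0 ≤ G t) (hG1 : ∀ t, G t ≤ 1)
    {N : ℕ} (hN : 1 ≤ N) {c : ℕ → ℝ}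
    (hcG : ∀ i, 1 ≤ i → i < N → G (c i) = i / N)
    {ε : ℝ} (hε : 0 < ε) (hNε : (1:ℝ)/N ≤ ε/2)
    (hclose : ∀ i, 1 ≤ i → i < N → |f (c i) - G (c i)| ≤ ε/2)
    (t : ℝ) : |f t - G t| ≤ ε := by
  classical
  set i₀ := Nat.findGreatest (fun i => c i ≤ t) (N - 1) with hi₀
  have hle : i₀ ≤ N - 1 := Nat.findGreatest_le _
  have hiN : i₀ < N := lt_of_le_of_lt hle (Nat.sub_lt hN one_pos)
  have hNpos : (0:ℝ) < (N:ℝ) := by exact_mod_cast hN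
  -- lower bound on f t
  have flow : (i₀ : ℝ)/N - ε/2 ≤ f t := by
    rcases Nat.eq_zero_or_pos i₀ with h0 | hpos
    · rw [h0]
      simp only [Nat.cast_zero, zero_div]
      linarith [hf0 t]
    · have hP : c i₀ ≤ t := Nat.findGreatest_of_ne_zero rfl (Nat.pos_iff_ne_zero.mp hpos)
      have h1i : 1 ≤ i₀ := hpos
      have hGc := hcG i₀ h1i hiN
      have hcl := hclose i₀ h1i hiN
      have : G (c i₀) - ε/2 ≤ f (c i₀) := by
        have := abs_le.mp hcl
        linarith [this.1]
      calc (i₀ : ℝ)/N - ε/2 = G (c i₀) - ε/2 := by rw [hGc]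
        _ ≤ f (c i₀) := this
        _ ≤ f t := hf hP
  -- lower bound on G t
  have Glow : (i₀ : ℝ)/N ≤ G t := by
    rcases Nat.eq_zero_or_pos i₀ with h0 | hpos
    · rw [h0]; simpa using hG0 t
    · have hP : c i₀ ≤ t := Nat.findGreatest_of_ne_zero rfl (Nat.pos_iff_ne_zero.mp hpos)
      have hGc := hcG i₀ hpos hiN
      calc (i₀ : ℝ)/N = G (c i₀) := hGc.symm
        _ ≤ G t := hGmono hP
  -- upper bounds
  have fhigh : f t ≤ ((i₀ : ℝ)+1)/N + ε/2 := by
    rcases le_or_gt N (i₀ + 1) with h | h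
    · have : (1:ℝ) ≤ ((i₀:ℝ)+1)/N := by
        rw [le_div_iff₀ hNpos]
        have : (N:ℝ) ≤ (i₀:ℝ) + 1 := by exact_mod_cast h
        linarith
      linarith [hf1 t]
    · have hi1 : i₀ + 1 ≤ N - 1 := by omega
      have hnP : ¬ c (i₀ + 1) ≤ t :=
        Nat.findGreatest_is_greatest (Nat.lt_succ_self i₀) hi1
      have htc : t ≤ c (i₀ + 1) := (not_le.mp hnP).le
      have hGc := hcG (i₀ + 1) (by omega) h
      have hcl := hclose (i₀ + 1) (by omega) h
      have h1 : f (c (i₀+1)) ≤ G (c (i₀+1)) + ε/2 := by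
        have := abs_le.mp hcl
        linarith [this.1]
      have h2 : G (c (i₀+1)) = ((i₀:ℝ)+1)/N := by
        rw [hGc]; push_cast; ring
      calc f t ≤ f (c (i₀+1)) := hf htc
        _ ≤ G (c (i₀+1)) + ε/2 := h1
        _ = ((i₀:ℝ)+1)/N + ε/2 := by rw [h2]
  have Ghigh : G t ≤ ((i₀ : ℝ)+1)/N := by
    rcases le_or_gt N (i₀ + 1) with h | h
    · have : (1:ℝ) ≤ ((i₀:ℝ)+1)/N := by
        rw [le_div_iff₀ hNpos]
        have : (N:ℝ) ≤ (i₀:ℝ) + 1 := by exact_mod_cast h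
        linarith
      linarith [hG1 t]
    · have hi1 : i₀ + 1 ≤ N - 1 := by omega
      have hnP : ¬ c (i₀ + 1) ≤ t :=
        Nat.findGreatest_is_greatest (Nat.lt_succ_self i₀) hi1
      have htc : t ≤ c (i₀ + 1) := (not_le.mp hnP).le
      have hGc := hcG (i₀ + 1) (by omega) h
      have h2 : G (c (i₀+1)) = ((i₀:ℝ)+1)/N := by
        rw [hGc]; push_cast; ring
      calc G t ≤ G (c (i₀+1)) := hGmono htc
        _ = ((i₀:ℝ)+1)/N := h2
  have hstep : ((i₀:ℝ)+1)/N = (i₀:ℝ)/N + 1/N := by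
    field_simp
  rw [abs_sub_le_iff]
  exact ⟨by linarith, by linarith⟩

/-- **Lemma B.5**: let `F_n(·, ω)` be random CDFs (non-decreasing, right-continuous,
with limits `0` at `-∞` and `1` at `+∞`) converging pointwise in probability to a
deterministic continuous CDF `G`.  Then `sup_x |F_n(x) - G(x)| → 0` in probability. -/
theorem uniform_convergence_of_random_cdfs
    {Ω : Type*} [MeasurableSpace Ω] (μ : Measure Ω) [IsProbabilityMeasure μ]
    (F : ℕ → Ω → ℝ → ℝ)
    (hmono : ∀ n ω, Monotone (F n ω))
    (hrc : ∀ n ω x, ContinuousWithinAt (F n ω) (Set.Ici x) x)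
    (hbot : ∀ n ω, Tendsto (F n ω) atBot (nhds 0))
    (htop : ∀ n ω, Tendsto (F n ω) atTop (nhds 1))
    (G : ℝ → ℝ) (hGcont : Continuous G) (hGmono : Monotone G)
    (hGbot : Tendsto G atBot (nhds 0)) (hGtop : Tendsto G atTop (nhds 1))
    (hptwise : ∀ x : ℝ, ∀ ε > (0:ℝ),
      Tendsto (fun n => μ {ω | ε < |F n ω x - G x|}) atTop (nhds 0)) :
    ∀ ε > (0:ℝ),
      Tendsto (fun n => μ {ω | ε < ⨆ x : ℝ, |F n ω x - G x|}) atTop (nhds 0) := by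
  intro ε hε
  -- bounds on G and F
  have hG0 : ∀ t, 0 ≤ G t := fun t => by
    refine le_of_tendsto hGbot ?_
    filter_upwards [eventually_le_atBot t] with s hs using hGmono hs
  have hG1 : ∀ t, G t ≤ 1 := fun t => by
    refine ge_of_tendsto hGtop ?_
    filter_upwards [eventually_ge_atTop t] with s hs using hGmono hs
  have hF0 : ∀ n ω t, 0 ≤ F n ω t := fun n ω t => by
    refine le_of_tendsto (hbot n ω) ?_
    filter_upwards [eventually_le_atBot t] with s hs using hmono n ω hs
  have hF1 : ∀ n ω t, F n ω t ≤ 1 := fun n ω t => by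
    refine ge_of_tendsto (htop n ω) ?_
    filter_upwards [eventually_ge_atTop t] with s hs using hmono n ω hs
  -- choose N with 1/N ≤ ε/2
  obtain ⟨N, hN⟩ := exists_nat_gt (max 1 (2/ε))
  have hN1 : 1 ≤ N := by
    have : (1:ℝ) < N := lt_of_le_of_lt (le_max_left _ _) hN
    exact_mod_cast this.le
  have hNε : (1:ℝ)/N ≤ ε/2 := by
    have h2ε : (0:ℝ) < 2/ε := by positivity
    have hNpos : (0:ℝ) < N := lt_trans h2ε (lt_of_le_of_lt (le_max_right _ _) hN)
    have : 2/ε < (N:ℝ) := lt_of_le_of_lt (le_max_right _ _) hN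
    rw [div_le_div_iff₀ hNpos (by norm_num : (0:ℝ) < 2)]
    rw [div_lt_iff₀ hε] at this
    linarith
  -- choose the grid
  have hgrid : ∀ i : ℕ, 1 ≤ i → i < N → ∃ c, G c = (i:ℝ) / N := by
    intro i h1 h2
    refine exists_eq_of_cdf hGcont hGmono hGbot hGtop ?_ ?_
    · apply div_pos
      · exact_mod_cast Nat.pos_of_ne_zero (by omega)
      · exact_mod_cast Nat.pos_of_ne_zero (by omega)
    · rw [div_lt_one (by exact_mod_cast Nat.pos_of_ne_zero (by omega))]
      exact_mod_cast h2
  choose! c hc using hgrid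
  -- inclusion into finite union of bad events
  have hsub : ∀ n, {ω | ε < ⨆ t : ℝ, |F n ω t - G t|} ⊆
      ⋃ i ∈ Finset.Ico 1 N, {ω | ε/2 < |F n ω (c i) - G (c i)|} := by
    intro n ω hω
    by_contra hcon
    simp only [Set.mem_iUnion, Set.mem_setOf_eq, not_exists, not_lt] at hcon
    have hclose : ∀ i, 1 ≤ i → i < N → |F n ω (c i) - G (c i)| ≤ ε/2 := by
      intro i h1 h2
      exact hcon i (Finset.mem_Ico.mpr ⟨h1, h2⟩)
    have hall : ∀ t, |F n ω t - G t| ≤ ε :=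
      key_estimate (hmono n ω) (hF0 n ω) (hF1 n ω) hGmono hG0 hG1 hN1 hc hε hNε hclose
    have hsup : (⨆ t : ℝ, |F n ω t - G t|) ≤ ε := ciSup_le hall
    have : ε < ⨆ t : ℝ, |F n ω t - G t| := hω
    linarith
  have hbound : ∀ n, μ {ω | ε < ⨆ t : ℝ, |F n ω t - G t|} ≤
      ∑ i ∈ Finset.Ico 1 N, μ {ω | ε/2 < |F n ω (c i) - G (c i)|} := fun n =>
    (measure_mono (hsub n)).trans (measure_biUnion_finset_le _ _)
  have hsum : Tendsto
      (fun n => ∑ i ∈ Finset.Ico 1 N, μ {ω | ε/2 < |F n ω (c i) - G (c i)|})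
      atTop (nhds 0) := by
    have := tendsto_finset_sum (Finset.Ico 1 N)
      (fun i _ => hptwise (c i) (ε/2) (by linarith))
    simpa using this
  exact tendsto_of_tendsto_of_tendsto_of_le_of_le tendsto_const_nhds hsum
    (fun n => zero_le) hbound

end PermTestPaper
end
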